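/- (Semantic core of the completeness of the independence axioms.) Let M be a set, let Σ be a set of pairs (z,w) of finite subsets of M (independence assertions), and let x, y be finite subsets of M. If the independence x ⊥ y holds under every relational diversity rank function on M under which every assertion of Σ holds, then x ⊥ y holds under every diversity rank function on M under which every assertion of Σ holds. Here a rank function rk satisfies the assertion (z,w) iff rk(z ∪ w) = rk(z) + rk(w). -/
import Mathlib


/-- `rk` is a diversity rank function: it maps finite sets to nonnegative reals and
satisfies axioms R1--R4. -/
def IsDivRank {α : Type*} [DecidableEq α] (rk : Finset α → ℝ) : Prop :=
  (∀ x : Finset α, 0 ≤ rk x) ∧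
  rk ∅ = 0 ∧
  (∀ x y : Finset α, rk x ≤ rk (x ∪ y) ∧ rk (x ∪ y) ≤ rk x + rk y) ∧
  (∀ x y z : Finset α, rk (x ∪ y) = rk x → rk (x ∪ y ∪ z) = rk (x ∪ z)) ∧
  (∀ x y z : Finset α, rk (x ∪ y ∪ z) = rk x + rk (y ∪ z) → rk (x ∪ y) = rk x + rk y)

/-- The relational diversity rank induced by a team `X` of assignments `α → β`:
`rk_X(x) = log₂ |{s↾x : s ∈ X}|`. -/
noncomputable def relRank {α : Type*} {β : Type*} (X : Finset (α → β)) (x : Finset α) : ℝ :=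
  Real.logb 2 (Set.ncard ((↑x : Set α).restrict '' (↑X : Set (α → β))))


section RankAux
variable {α : Type*} [DecidableEq α] {rk : Finset α → ℝ}

lemma r_empty (h : IsDivRank rk) : rk ∅ = 0 := h.2.1

lemma r_sub (h : IsDivRank rk) (z w : Finset α) : rk (z ∪ w) ≤ rk z + rk w :=
  (h.2.2.1 z w).2

lemma r_mono (h : IsDivRank rk) {z w : Finset α} (hzw : z ⊆ w) : rk z ≤ rk w := by
  have := (h.2.2.1 z w).1
  rwa [Finset.union_eq_right.mpr hzw] at this

lemma r_symm (h : IsDivRank rk) {z w : Finset α} (e : rk (z ∪ w) = rk z + rk w) :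
    rk (w ∪ z) = rk w + rk z := by rw [Finset.union_comm, e]; ring

lemma r_monoIndep (h : IsDivRank rk) {z w z' w' : Finset α}
    (e : rk (z ∪ w) = rk z + rk w) (hz : z' ⊆ z) (hw : w' ⊆ w) :
    rk (z' ∪ w') = rk z' + rk w' := by
  have step1 : rk (z ∪ w') = rk z + rk w' := by
    apply h.2.2.2.2 z w' w
    rw [Finset.union_assoc, Finset.union_eq_right.mpr hw, e]
  have step1' : rk (w' ∪ z) = rk w' + rk z := r_symm h step1
  have step2 : rk (w' ∪ z') = rk w' + rk z' := by
    apply h.2.2.2.2 w' z' z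
    rw [Finset.union_assoc, Finset.union_eq_right.mpr hz, step1']
  exact r_symm h step2

lemma r_mix (h : IsDivRank rk) {a b c : Finset α}
    (e1 : rk (a ∪ b) = rk a + rk b) (e2 : rk (a ∪ b ∪ c) = rk (a ∪ b) + rk c) :
    rk (a ∪ (b ∪ c)) = rk a + rk (b ∪ c) := by
  apply le_antisymm (r_sub h a (b ∪ c))
  have h1 : rk (a ∪ (b ∪ c)) = rk a + rk b + rk c := by
    rw [← Finset.union_assoc, e2, e1]
  have := r_sub h b c
  linarith

lemma r_insert_null (h : IsDivRank rk) {v : α} (hv : rk {v} = 0) (s : Finset α) :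
    rk (insert v s) = rk s := by
  have h3 := h.2.2.2.1 ∅ {v} s
  simp only [Finset.empty_union] at h3
  rw [Finset.insert_eq]
  exact h3 (by rw [hv, r_empty h])

lemma r_erase_null (h : IsDivRank rk) {v : α} (hv : rk {v} = 0) (s : Finset α) :
    rk (s.erase v) = rk s := by
  by_cases hvs : v ∈ s
  · conv_rhs => rw [← Finset.insert_erase hvs]
    rw [r_insert_null h hv]
  · rw [Finset.erase_eq_of_notMem hvs]

lemma r_shared_null (h : IsDivRank rk) {z w : Finset α}
    (e : rk (z ∪ w) = rk z + rk w) {v : α} (hvz : v ∈ z) (hvw : v ∈ w) : rk {v} = 0 := by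
  have := r_monoIndep h e (Finset.singleton_subset_iff.mpr hvz) (Finset.singleton_subset_iff.mpr hvw)
  rw [Finset.union_self] at this
  linarith

end RankAux


section Split
variable {α : Type*} [DecidableEq α] {rk : Finset α → ℝ}

lemma r_split (h : IsDivRank rk) {x y A B : Finset α}
    (hsub : A ∪ B ⊆ x ∪ y)
    (hdis : ∀ v ∈ A ∪ B, v ∈ x → v ∈ y → False)
    (hmin : ∀ K₀ ⊆ A ∪ B, K₀ ≠ A ∪ B →
      rk ((K₀ ∩ x) ∪ (K₀ ∩ y)) = rk (K₀ ∩ x) + rk (K₀ ∩ y))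
    (hA : A.Nonempty) (hB : B.Nonempty) (hABd : Disjoint A B)
    (hI : rk (A ∪ B) = rk A + rk B) :
    rk (((A ∪ B) ∩ x) ∪ ((A ∪ B) ∩ y)) = rk ((A ∪ B) ∩ x) + rk ((A ∪ B) ∩ y) := by
  set Ax := A ∩ x with hAx
  set Ay := A ∩ y with hAy
  set Bx := B ∩ x with hBx
  set By := B ∩ y with hBy
  have eA : Ax ∪ Ay = A := by
    rw [hAx, hAy, ← Finset.inter_union_distrib_left]
    exact Finset.inter_eq_left.mpr (fun v hv => hsub (Finset.mem_union_left _ hv))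
  have eB : Bx ∪ By = B := by
    rw [hBx, hBy, ← Finset.inter_union_distrib_left]
    exact Finset.inter_eq_left.mpr (fun v hv => hsub (Finset.mem_union_right _ hv))
  have eKx : (A ∪ B) ∩ x = Ax ∪ Bx := Finset.union_inter_distrib_right A B x
  have eKy : (A ∪ B) ∩ y = Ay ∪ By := Finset.union_inter_distrib_right A B y
  rw [eKx, eKy]
  rcases Finset.eq_empty_or_nonempty By with hByE | hByNE
  · -- By = ∅
    rcases Finset.eq_empty_or_nonempty Ay with hAyE | hAyNE
    · rw [hByE, hAyE]
      simp [r_empty h]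
    · have hBeq : Bx = B := by rw [← eB, hByE, Finset.union_empty]
      have hAne : A ≠ A ∪ B := by
        intro hcon
        obtain ⟨v, hv⟩ := hB
        have : v ∈ A := by rw [hcon]; exact Finset.mem_union_right _ hv
        exact (Finset.disjoint_left.mp hABd this) hv
      have M1 : rk (Ax ∪ Ay) = rk Ax + rk Ay :=
        hmin A Finset.subset_union_left hAne
      have e2 : rk ((Ay ∪ Ax) ∪ Bx) = rk (Ay ∪ Ax) + rk Bx := by
        rw [Finset.union_comm Ay Ax, eA, hBeq]; exact hI
      have mix := r_mix h (r_symm h M1) e2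
      rw [hByE, Finset.union_empty]
      exact r_symm h mix
  · -- By nonempty
    have hBne : B ≠ A ∪ B := by
      intro hcon
      obtain ⟨v, hv⟩ := hA
      have : v ∈ B := by rw [hcon]; exact Finset.mem_union_left _ hv
      exact (Finset.disjoint_left.mp hABd hv) this
    have M1 : rk (Bx ∪ By) = rk Bx + rk By :=
      hmin B Finset.subset_union_right hBne
    have e2 : rk ((By ∪ Bx) ∪ A) = rk (By ∪ Bx) + rk A := by
      rw [Finset.union_comm By Bx, eB, Finset.union_comm B A]
      rw [hI]; ring
    have step3 : rk (By ∪ (Bx ∪ A)) = rk By + rk (Bx ∪ A) :=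
      r_mix h (r_symm h M1) e2
    -- M2
    have hABxsub : A ∪ Bx ⊆ A ∪ B :=
      Finset.union_subset_union_right Finset.inter_subset_left
    have hABxne : A ∪ Bx ≠ A ∪ B := by
      intro hcon
      obtain ⟨v, hv⟩ := hByNE
      have hvB : v ∈ B := (Finset.mem_inter.mp hv).1
      have hvy : v ∈ y := (Finset.mem_inter.mp hv).2
      have hvAB : v ∈ A ∪ B := Finset.mem_union_right _ hvB
      rw [← hcon] at hvAB
      rcases Finset.mem_union.mp hvAB with hvA | hvBx
      · exact (Finset.disjoint_right.mp hABd hvB) hvA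
      · exact hdis v (Finset.mem_union_right _ hvB) (Finset.mem_inter.mp hvBx).2 hvy
    have M2' := hmin (A ∪ Bx) hABxsub hABxne
    have ex1 : (A ∪ Bx) ∩ x = Ax ∪ Bx := by
      rw [Finset.union_inter_distrib_right, ← hAx]
      congr 1
      exact Finset.inter_eq_left.mpr Finset.inter_subset_right
    have ex2 : (A ∪ Bx) ∩ y = Ay := by
      rw [Finset.union_inter_distrib_right, ← hAy]
      have : Bx ∩ y = ∅ := by
        rw [Finset.eq_empty_iff_forall_notMem]
        intro v hv
        simp only [hBx, Finset.mem_inter] at hv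
        exact hdis v (Finset.mem_union_right _ hv.1.1) hv.1.2 hv.2
      rw [this, Finset.union_empty]
    rw [ex1, ex2] at M2'
    have e2' : rk ((Ax ∪ Bx) ∪ Ay ∪ By) = rk ((Ax ∪ Bx) ∪ Ay) + rk By := by
      have hseteq : (Ax ∪ Bx) ∪ Ay = Bx ∪ A := by
        rw [← eA]
        ext v
        simp only [Finset.mem_union]
        tauto
      rw [hseteq]
      rw [Finset.union_comm Bx A] at step3 ⊢
      exact r_symm h step3
    exact r_mix h M2' e2'

end Split

section Team
variable {α : Type*} [DecidableEq α]

lemma zmod2_cases : ∀ a : ZMod 2, a = 0 ∨ a = 1 := by decide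

noncomputable def indFun (T : Finset α) : α → ZMod 2 := fun v => if v ∈ T then 1 else 0

noncomputable def pindFun (u₀ : α) (T : Finset α) : α → ZMod 2 :=
  fun v => (if v ∈ T then (1 : ZMod 2) else 0) + (if v = u₀ then (T.card : ZMod 2) else 0)

noncomputable def indTeam (K : Finset α) : Finset (α → ZMod 2) :=
  letI := Classical.decEq (α → ZMod 2)
  K.powerset.image indFun

noncomputable def pTeam (K : Finset α) (u₀ : α) : Finset (α → ZMod 2) :=
  letI := Classical.decEq (α → ZMod 2)
  (K.erase u₀).powerset.image (pindFun u₀)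

lemma indTeam_nonempty (K : Finset α) : (indTeam K).Nonempty := by
  classical
  simp [indTeam, Finset.image_nonempty]
  exact ⟨∅, Finset.empty_mem_powerset _⟩

lemma pTeam_nonempty (K : Finset α) (u₀ : α) : (pTeam K u₀).Nonempty := by
  classical
  simp [pTeam, Finset.image_nonempty]
  exact ⟨∅, Finset.empty_mem_powerset _⟩

lemma coe_indTeam (K : Finset α) : (↑(indTeam K) : Set (α → ZMod 2)) = indFun '' ↑K.powerset := by
  simp [indTeam]

lemma coe_pTeam (K : Finset α) (u₀ : α) :
    (↑(pTeam K u₀) : Set (α → ZMod 2)) = pindFun u₀ '' ↑(K.erase u₀).powerset := by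
  simp [pTeam]

lemma restrict_eq_iff {β : Type*} (z : Finset α) (s t : α → β) :
    (↑z : Set α).restrict s = (↑z : Set α).restrict t ↔ ∀ v ∈ z, s v = t v := by
  constructor
  · intro h v hv
    exact congrFun h ⟨v, Finset.mem_coe.mpr hv⟩
  · intro h
    funext v
    exact h v (Finset.mem_coe.mp v.2)

/-- injectivity of restricted plain indicators on subsets of `z ∩ K` -/
lemma indFun_injOn (z K : Finset α) :
    Set.InjOn (fun T => (↑z : Set α).restrict (indFun T)) ↑(z ∩ K).powerset := by
  intro T hT T' hT' hEq
  simp only [Finset.mem_coe, Finset.mem_powerset] at hT hT'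
  have key := (restrict_eq_iff z _ _).mp hEq
  ext v
  constructor
  · intro hv
    have hvz : v ∈ z := Finset.mem_inter.mp (hT hv) |>.1
    have := key v hvz
    simp only [indFun, if_pos hv] at this
    by_contra hv'
    rw [if_neg hv'] at this
    exact one_ne_zero this
  · intro hv
    have hvz : v ∈ z := Finset.mem_inter.mp (hT' hv) |>.1
    have := key v hvz
    simp only [indFun, if_pos hv] at this
    by_contra hv'
    rw [if_neg hv'] at this
    exact one_ne_zero this.symm

lemma cnt_indTeam (K z : Finset α) :
    Set.ncard ((↑z : Set α).restrict '' (↑(indTeam K) : Set (α → ZMod 2))) = 2 ^ (z ∩ K).card := by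
  rw [coe_indTeam, Set.image_image]
  have himg : (fun T => (↑z : Set α).restrict (indFun T)) '' ↑K.powerset
      = (fun T => (↑z : Set α).restrict (indFun T)) '' ↑(z ∩ K).powerset := by
    apply Set.Subset.antisymm
    · rintro b ⟨T, hT, rfl⟩
      simp only [Finset.mem_coe, Finset.mem_powerset] at hT
      refine ⟨T ∩ z, ?_, ?_⟩
      · simp only [Finset.mem_coe, Finset.mem_powerset]
        intro v hv
        have := Finset.mem_inter.mp hv
        exact Finset.mem_inter.mpr ⟨this.2, hT this.1⟩
      · apply (restrict_eq_iff z _ _).mpr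
        intro v hv
        simp [indFun, Finset.mem_inter, hv]
    · rintro b ⟨T, hT, rfl⟩
      simp only [Finset.mem_coe, Finset.mem_powerset] at hT
      refine ⟨T, ?_, rfl⟩
      simp only [Finset.mem_coe, Finset.mem_powerset]
      exact hT.trans Finset.inter_subset_right
  rw [himg, Set.ncard_image_of_injOn (indFun_injOn z K), Set.ncard_coe_finset,
    Finset.card_powerset]

lemma cnt_pTeam_subset {K z : Finset α} {u₀ : α} (hu₀ : u₀ ∈ K) (hKz : K ⊆ z) :
    Set.ncard ((↑z : Set α).restrict '' (↑(pTeam K u₀) : Set (α → ZMod 2))) = 2 ^ (K.card - 1) := by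
  rw [coe_pTeam, Set.image_image]
  have hinj : Set.InjOn (fun T => (↑z : Set α).restrict (pindFun u₀ T)) ↑(K.erase u₀).powerset := by
    intro T hT T' hT' hEq
    simp only [Finset.mem_coe, Finset.mem_powerset] at hT hT'
    have key := (restrict_eq_iff z _ _).mp hEq
    have main : ∀ v ∈ K.erase u₀, (v ∈ T ↔ v ∈ T') := by
      intro v hv
      have hvne : v ≠ u₀ := Finset.ne_of_mem_erase hv
      have hvz : v ∈ z := hKz (Finset.mem_of_mem_erase hv)
      have := key v hvz
      simp only [pindFun, if_neg hvne, add_zero] at this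
      constructor
      · intro h1
        by_contra h2
        rw [if_pos h1, if_neg h2] at this
        exact one_ne_zero this
      · intro h2
        by_contra h1
        rw [if_neg h1, if_pos h2] at this
        exact one_ne_zero this.symm
    ext v
    constructor
    · intro hv; exact (main v (hT hv)).mp hv
    · intro hv; exact (main v (hT' hv)).mpr hv
  rw [Set.ncard_image_of_injOn hinj, Set.ncard_coe_finset, Finset.card_powerset,
    Finset.card_erase_of_mem hu₀]

lemma cnt_pTeam_not_subset {K z : Finset α} {u₀ : α} (hu₀ : u₀ ∈ K) (hKz : ¬ K ⊆ z) :
    Set.ncard ((↑z : Set α).restrict '' (↑(pTeam K u₀) : Set (α → ZMod 2))) = 2 ^ (z ∩ K).card := by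
  obtain ⟨w, hwK, hwz⟩ := Finset.not_subset.mp hKz
  rw [coe_pTeam, Set.image_image]
  have himg : (fun T => (↑z : Set α).restrict (pindFun u₀ T)) '' ↑(K.erase u₀).powerset
      = (fun T => (↑z : Set α).restrict (indFun T)) '' ↑(z ∩ K).powerset := by
    apply Set.Subset.antisymm
    · rintro b ⟨T, hT, rfl⟩
      simp only [Finset.mem_coe, Finset.mem_powerset] at hT
      have hu₀T : u₀ ∉ T := fun hc => (Finset.mem_erase.mp (hT hc)).1 rfl
      by_cases hcond : (T.card : ZMod 2) = 1 ∧ u₀ ∈ z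
      · refine ⟨insert u₀ (T ∩ z), ?_, ?_⟩
        · simp only [Finset.mem_coe, Finset.mem_powerset]
          intro v hv
          rcases Finset.mem_insert.mp hv with rfl | hv
          · exact Finset.mem_inter.mpr ⟨hcond.2, hu₀⟩
          · have := Finset.mem_inter.mp hv
            exact Finset.mem_inter.mpr ⟨this.2, Finset.mem_of_mem_erase (hT this.1)⟩
        · apply (restrict_eq_iff z _ _).mpr
          intro v hv
          by_cases hvu : v = u₀
          · subst hvu
            simp [pindFun, indFun, hu₀T, hcond.1]
          · simp [pindFun, indFun, hvu, Finset.mem_insert, Finset.mem_inter, hv]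
      · refine ⟨T ∩ z, ?_, ?_⟩
        · simp only [Finset.mem_coe, Finset.mem_powerset]
          intro v hv
          have := Finset.mem_inter.mp hv
          exact Finset.mem_inter.mpr ⟨this.2, Finset.mem_of_mem_erase (hT this.1)⟩
        · apply (restrict_eq_iff z _ _).mpr
          intro v hv
          by_cases hvu : v = u₀
          · subst hvu
            have hcard : (T.card : ZMod 2) = 0 := by
              rcases zmod2_cases (T.card : ZMod 2) with h | h
              · exact h
              · exact absurd ⟨h, hv⟩ hcond
            simp [pindFun, indFun, hu₀T, hcard, Finset.mem_inter]
          · simp [pindFun, indFun, hvu, Finset.mem_inter, hv]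
    · rintro b ⟨S, hS, rfl⟩
      simp only [Finset.mem_coe, Finset.mem_powerset] at hS
      by_cases hu₀z : u₀ ∈ z
      · -- w ≠ u₀ here
        have hwu : w ≠ u₀ := fun hc => hwz (hc ▸ hu₀z)
        set T₀ := S.erase u₀ with hT₀
        have hT₀sub : T₀ ⊆ K.erase u₀ := by
          intro v hv
          have hvS := Finset.mem_of_mem_erase hv
          exact Finset.mem_erase.mpr ⟨Finset.ne_of_mem_erase hv,
            (Finset.mem_inter.mp (hS hvS)).2⟩
        have hwT₀ : w ∉ T₀ := fun hc =>
          hwz (Finset.mem_inter.mp (hS (Finset.mem_of_mem_erase hc))).1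
        set p : ZMod 2 := if u₀ ∈ S then 1 else 0 with hp
        by_cases hpar : (T₀.card : ZMod 2) = p
        · refine ⟨T₀, Finset.mem_coe.mpr (Finset.mem_powerset.mpr hT₀sub), ?_⟩
          apply (restrict_eq_iff z _ _).mpr
          intro v hv
          by_cases hvu : v = u₀
          · subst hvu
            have : v ∉ T₀ := fun hc => (Finset.ne_of_mem_erase hc) rfl
            simp [pindFun, indFun, if_neg this, hpar, hp]
          · have : (v ∈ T₀) = (v ∈ S) := by
              simp [hT₀, Finset.mem_erase, hvu]
            simp [pindFun, indFun, hvu, this]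
        · refine ⟨insert w T₀, ?_, ?_⟩
          · simp only [Finset.mem_coe, Finset.mem_powerset]
            intro v hv
            rcases Finset.mem_insert.mp hv with rfl | hv
            · exact Finset.mem_erase.mpr ⟨hwu, hwK⟩
            · exact hT₀sub hv
          · have hcard : ((insert w T₀).card : ZMod 2) = p := by
              rw [Finset.card_insert_of_notMem hwT₀]
              push_cast
              rcases zmod2_cases (T₀.card : ZMod 2) with h | h <;>
                rcases zmod2_cases p with h' | h' <;>
                  rw [h, h'] <;> first | decide | (exfalso; exact hpar (by rw [h, h']))
            apply (restrict_eq_iff z _ _).mpr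
            intro v hv
            have hvw : v ≠ w := fun hc => hwz (hc ▸ hv)
            by_cases hvu : v = u₀
            · subst hvu
              have hvT : v ∉ insert w T₀ := by
                intro hc
                rcases Finset.mem_insert.mp hc with rfl | hc
                · exact hwu rfl
                · exact (Finset.ne_of_mem_erase hc) rfl
              simp [pindFun, indFun, if_neg hvT, hcard, hp]
              exact ⟨hvw, fun hc => (Finset.ne_of_mem_erase hc) rfl⟩
            · have : (v ∈ insert w T₀) = (v ∈ S) := by
                simp [Finset.mem_insert, hvw, hT₀, Finset.mem_erase, hvu]
              simp [pindFun, indFun, hvu, this]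
      · -- u₀ ∉ z : take T := S
        have hSsub : S ⊆ K.erase u₀ := by
          intro v hv
          have hvm := Finset.mem_inter.mp (hS hv)
          exact Finset.mem_erase.mpr ⟨fun hc => hu₀z (hc ▸ hvm.1), hvm.2⟩
        refine ⟨S, Finset.mem_coe.mpr (Finset.mem_powerset.mpr hSsub), ?_⟩
        apply (restrict_eq_iff z _ _).mpr
        intro v hv
        have hvu : v ≠ u₀ := fun hc => hu₀z (hc ▸ hv)
        simp [pindFun, indFun, hvu]
  rw [himg, Set.ncard_image_of_injOn (indFun_injOn z K), Set.ncard_coe_finset,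
    Finset.card_powerset]


noncomputable def liftTeam {α : Type*} {β γ : Type*} (f : β → γ) (X : Finset (α → β)) :
    Finset (α → γ) :=
  letI := Classical.decEq (α → γ)
  X.image (fun s => f ∘ s)

lemma liftTeam_nonempty {α : Type*} {β γ : Type*} (f : β → γ) {X : Finset (α → β)}
    (hX : X.Nonempty) : (liftTeam f X).Nonempty := by
  classical
  simpa [liftTeam, Finset.image_nonempty] using hX

lemma cnt_liftTeam {α : Type*} {β γ : Type*} {f : β → γ} (hf : Function.Injective f)
    (X : Finset (α → β)) (z : Finset α) :
    Set.ncard ((↑z : Set α).restrict '' (↑(liftTeam f X) : Set (α → γ)))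
      = Set.ncard ((↑z : Set α).restrict '' (↑X : Set (α → β))) := by
  classical
  have h1 : (↑(liftTeam f X) : Set (α → γ)) = (fun s => f ∘ s) '' ↑X := by
    simp [liftTeam]
  rw [h1, Set.image_image]
  have h2 : (fun s => (↑z : Set α).restrict (f ∘ s)) =
      (fun t => f ∘ t) ∘ (fun s => (↑z : Set α).restrict s) := rfl
  rw [h2, Set.image_comp]
  apply Set.ncard_image_of_injective
  intro t t' ht
  funext v
  exact hf (congrFun ht v)

lemma relRank_of_ncard_pow {β : Type*} (X : Finset (α → β)) (z : Finset α) (n : ℕ)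
    (hc : Set.ncard ((↑z : Set α).restrict '' (↑X : Set (α → β))) = 2 ^ n) :
    relRank X z = n := by
  rw [relRank, hc]
  push_cast
  rw [Real.logb_pow, Real.logb_self_eq_one (by norm_num)]
  ring

end Team

/-- If `x ⊥ y` holds under every relational diversity rank function satisfying all
independence assertions of `Σ`, then it holds under every diversity rank function
satisfying all assertions of `Σ`. -/

theorem indep_completeness {α : Type*} [DecidableEq α]
    (Sig : Set (Finset α × Finset α)) (x y : Finset α)
    (h : ∀ (β : Type*) (X : Finset (α → β)), X.Nonempty →
      (∀ p ∈ Sig, relRank X (p.1 ∪ p.2) = relRank X p.1 + relRank X p.2) →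
      relRank X (x ∪ y) = relRank X x + relRank X y) :
    ∀ rk : Finset α → ℝ, IsDivRank rk →
      (∀ p ∈ Sig, rk (p.1 ∪ p.2) = rk p.1 + rk p.2) →
      rk (x ∪ y) = rk x + rk y := by
  intro rk hrk hSig
  by_contra hne
  by_cases hcase : ∃ u ∈ x ∩ y, rk {u} ≠ 0
  · -- Case 1 : a shared non-null variable; use the free team on {u}
    obtain ⟨u, hu, hu0⟩ := hcase
    have hux : u ∈ x := (Finset.mem_inter.mp hu).1
    have huy : u ∈ y := (Finset.mem_inter.mp hu).2
    set X := liftTeam ULift.up (indTeam ({u} : Finset α)) with hX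
    have hrel : ∀ s : Finset α, relRank X s = ((s ∩ {u}).card : ℝ) :=
      fun s => relRank_of_ncard_pow X s _
        ((cnt_liftTeam ULift.up_injective _ s).trans (cnt_indTeam {u} s))
    have hatoms : ∀ p ∈ Sig, relRank X (p.1 ∪ p.2) = relRank X p.1 + relRank X p.2 := by
      intro p hp
      have hzw := hSig p hp
      have hnot : ¬ (u ∈ p.1 ∧ u ∈ p.2) := by
        rintro ⟨h1, h2⟩
        exact hu0 (r_shared_null hrk hzw h1 h2)
      rw [hrel, hrel, hrel]
      by_cases h1 : u ∈ p.1 <;> by_cases h2 : u ∈ p.2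
      · exact absurd ⟨h1, h2⟩ hnot
      · rw [Finset.inter_singleton_of_mem h1, Finset.inter_singleton_of_notMem h2,
          Finset.inter_singleton_of_mem (Finset.mem_union_left _ h1)]
        simp
      · rw [Finset.inter_singleton_of_notMem h1, Finset.inter_singleton_of_mem h2,
          Finset.inter_singleton_of_mem (Finset.mem_union_right _ h2)]
        simp
      · rw [Finset.inter_singleton_of_notMem h1, Finset.inter_singleton_of_notMem h2,
          Finset.inter_singleton_of_notMem (by simp [h1, h2])]
        simp
    have hmain := h _ X (liftTeam_nonempty _ (indTeam_nonempty _)) hatoms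
    rw [hrel, hrel, hrel, Finset.inter_singleton_of_mem hux, Finset.inter_singleton_of_mem huy,
      Finset.inter_singleton_of_mem (Finset.mem_union_left _ hux)] at hmain
    norm_num at hmain
  · -- Case 2 : all shared variables are null
    push_neg at hcase
    classical
    set S : Finset (Finset α) :=
      (x ∪ y).powerset.filter (fun K => rk ((K ∩ x) ∪ (K ∩ y)) ≠ rk (K ∩ x) + rk (K ∩ y))
      with hS
    have hxyS : x ∪ y ∈ S := by
      rw [hS, Finset.mem_filter, Finset.mem_powerset]
      refine ⟨Finset.Subset.refl _, ?_⟩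
      rw [Finset.inter_eq_right.mpr Finset.subset_union_left,
        Finset.inter_eq_right.mpr Finset.subset_union_right]
      exact hne
    obtain ⟨K, hKS, hKmin⟩ := Finset.exists_min_image S Finset.card ⟨_, hxyS⟩
    rw [hS, Finset.mem_filter, Finset.mem_powerset] at hKS
    obtain ⟨hKsub, hKdep⟩ := hKS
    have hmin : ∀ K₀ ⊆ K, K₀ ≠ K →
        rk ((K₀ ∩ x) ∪ (K₀ ∩ y)) = rk (K₀ ∩ x) + rk (K₀ ∩ y) := by
      intro K₀ hsub hne₀
      by_contra hdep₀
      have hK₀S : K₀ ∈ S := by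
        rw [hS, Finset.mem_filter, Finset.mem_powerset]
        exact ⟨hsub.trans hKsub, hdep₀⟩
      have hlt := Finset.card_lt_card (Finset.ssubset_iff_subset_ne.mpr ⟨hsub, hne₀⟩)
      have := hKmin K₀ hK₀S
      omega
    have hnonnull : ∀ v ∈ K, rk {v} ≠ 0 := by
      intro v hv hv0
      apply hKdep
      have h1 : (K.erase v) ∩ x = (K ∩ x).erase v := by
        ext v'; simp only [Finset.mem_inter, Finset.mem_erase]; tauto
      have h2 : (K.erase v) ∩ y = (K ∩ y).erase v := by
        ext v'; simp only [Finset.mem_inter, Finset.mem_erase]; tauto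
      have h3 : ((K ∩ x).erase v) ∪ ((K ∩ y).erase v) = ((K ∩ x) ∪ (K ∩ y)).erase v := by
        ext v'; simp only [Finset.mem_union, Finset.mem_erase]; tauto
      have heq := hmin (K.erase v) (Finset.erase_subset v K)
        (fun hc => (Finset.erase_eq_self.mp hc) hv)
      rw [h1, h2, h3, r_erase_null hrk hv0, r_erase_null hrk hv0, r_erase_null hrk hv0] at heq
      exact heq
    have hdisKxy : ∀ v ∈ K, v ∈ x → v ∈ y → False := by
      intro v hv hvx hvy
      exact hnonnull v hv (hcase v (Finset.mem_inter.mpr ⟨hvx, hvy⟩))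
    have hKxne : (K ∩ x).Nonempty := by
      rcases Finset.eq_empty_or_nonempty (K ∩ x) with he | hne'
      · exfalso; apply hKdep
        rw [he, Finset.empty_union, r_empty hrk]
        ring
      · exact hne'
    have hKyne : (K ∩ y).Nonempty := by
      rcases Finset.eq_empty_or_nonempty (K ∩ y) with he | hne'
      · exfalso; apply hKdep
        rw [he, Finset.union_empty, r_empty hrk]
        ring
      · exact hne'
    obtain ⟨u₀, hu₀⟩ := hKxne
    have hu₀K : u₀ ∈ K := (Finset.mem_inter.mp hu₀).1
    have hKne : 1 ≤ K.card := Finset.card_pos.mpr ⟨u₀, hu₀K⟩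
    set E : Finset α → ℕ := fun s => if K ⊆ s then K.card - 1 else (s ∩ K).card with hE
    set X := liftTeam ULift.up (pTeam K u₀) with hX
    have hrel : ∀ s : Finset α, relRank X s = (E s : ℝ) := by
      intro s
      by_cases hKs : K ⊆ s
      · rw [hE]; simp only [if_pos hKs]
        exact relRank_of_ncard_pow X s _
          ((cnt_liftTeam ULift.up_injective _ s).trans (cnt_pTeam_subset hu₀K hKs))
      · rw [hE]; simp only [if_neg hKs]
        exact relRank_of_ncard_pow X s _
          ((cnt_liftTeam ULift.up_injective _ s).trans (cnt_pTeam_not_subset hu₀K hKs))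
    -- the atoms hold in the team
    have hatoms : ∀ p ∈ Sig, relRank X (p.1 ∪ p.2) = relRank X p.1 + relRank X p.2 := by
      intro p hp
      have hzw := hSig p hp
      set z := p.1
      set w := p.2
      have hzwK : ∀ v ∈ K, v ∈ z → v ∈ w → False := by
        intro v hv h1 h2
        exact hnonnull v hv (r_shared_null hrk hzw h1 h2)
      have hdisj : Disjoint (z ∩ K) (w ∩ K) := by
        rw [Finset.disjoint_left]
        intro v h1 h2
        exact hzwK v (Finset.mem_inter.mp h1).2 (Finset.mem_inter.mp h1).1
          (Finset.mem_inter.mp h2).1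
      have hcard : ((z ∪ w) ∩ K).card = (z ∩ K).card + (w ∩ K).card := by
        rw [Finset.union_inter_distrib_right, Finset.card_union_of_disjoint hdisj]
      rw [hrel, hrel, hrel]
      have goalNat : E (z ∪ w) = E z + E w := by
        by_cases h1 : K ⊆ z
        · have h2 : ¬ K ⊆ w := by
            intro hc
            exact hzwK u₀ hu₀K (h1 hu₀K) (hc hu₀K)
          have hwK : w ∩ K = ∅ := by
            rw [Finset.eq_empty_iff_forall_notMem]
            intro v hv
            have := Finset.mem_inter.mp hv
            exact hzwK v this.2 (h1 this.2) this.1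
          rw [hE]
          simp only [if_pos h1, if_pos (h1.trans Finset.subset_union_left), if_neg h2, hwK]
          simp
        · by_cases h2 : K ⊆ w
          · have hzK : z ∩ K = ∅ := by
              rw [Finset.eq_empty_iff_forall_notMem]
              intro v hv
              have := Finset.mem_inter.mp hv
              exact hzwK v this.2 this.1 (h2 this.2)
            rw [hE]
            simp only [if_pos h2, if_pos (h2.trans Finset.subset_union_right), if_neg h1, hzK]
            simp
          · by_cases h3 : K ⊆ z ∪ w
            · -- impossible by the splitting lemma
              exfalso
              have hABK : (K ∩ z) ∪ (K ∩ w) = K := by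
                rw [← Finset.inter_union_distrib_left]
                exact Finset.inter_eq_left.mpr h3
              have hAne : (K ∩ z).Nonempty := by
                obtain ⟨v, hvK, hvw⟩ := Finset.not_subset.mp h2
                have hvz : v ∈ z := by
                  rcases Finset.mem_union.mp (h3 hvK) with h' | h'
                  · exact h'
                  · exact absurd h' hvw
                exact ⟨v, Finset.mem_inter.mpr ⟨hvK, hvz⟩⟩
              have hBne : (K ∩ w).Nonempty := by
                obtain ⟨v, hvK, hvz⟩ := Finset.not_subset.mp h1
                have hvw : v ∈ w := by
                  rcases Finset.mem_union.mp (h3 hvK) with h' | h'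
                  · exact absurd h' hvz
                  · exact h'
                exact ⟨v, Finset.mem_inter.mpr ⟨hvK, hvw⟩⟩
              have hABd : Disjoint (K ∩ z) (K ∩ w) := by
                rw [Finset.disjoint_left]
                intro v hv1 hv2
                exact hzwK v (Finset.mem_inter.mp hv1).1 (Finset.mem_inter.mp hv1).2
                  (Finset.mem_inter.mp hv2).2
              have hI : rk ((K ∩ z) ∪ (K ∩ w)) = rk (K ∩ z) + rk (K ∩ w) :=
                r_monoIndep hrk hzw Finset.inter_subset_right Finset.inter_subset_right
              have := r_split hrk (x := x) (y := y)
                (by rw [hABK]; exact hKsub)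
                (by rw [hABK]; exact hdisKxy)
                (by rw [hABK]; exact hmin)
                hAne hBne hABd hI
              rw [hABK] at this
              exact hKdep this
            · rw [hE]
              simp only [if_neg h1, if_neg h2, if_neg h3]
              exact hcard
      rw [goalNat]
      push_cast
      ring
    -- apply the hypothesis and derive a contradiction
    have hmain := h _ X (liftTeam_nonempty _ (pTeam_nonempty _ _)) hatoms
    rw [hrel, hrel, hrel] at hmain
    have hmainN : E (x ∪ y) = E x + E y := by exact_mod_cast hmain
    have hnx : ¬ K ⊆ x := by
      intro hc
      obtain ⟨v, hv⟩ := hKyne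
      have := Finset.mem_inter.mp hv
      exact hdisKxy v this.1 (hc this.1) this.2
    have hny : ¬ K ⊆ y := by
      intro hc
      exact hdisKxy u₀ hu₀K (Finset.mem_inter.mp hu₀).2 (hc hu₀K)
    have hdisj : Disjoint (x ∩ K) (y ∩ K) := by
      rw [Finset.disjoint_left]
      intro v h1 h2
      exact hdisKxy v (Finset.mem_inter.mp h1).2 (Finset.mem_inter.mp h1).1
        (Finset.mem_inter.mp h2).1
    have hcardK : (x ∩ K).card + (y ∩ K).card = K.card := by
      rw [← Finset.card_union_of_disjoint hdisj, ← Finset.union_inter_distrib_right,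
        Finset.inter_eq_right.mpr hKsub]
    rw [hE] at hmainN
    simp only [if_pos hKsub, if_neg hnx, if_neg hny] at hmainN
    omega
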